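/- arXiv:1105.3104 — 4 statements merged into one kernel-verified Lean document; each statement's English description precedes it below -/
import Mathlib

section
/- Let G be a monoid and k a field. The canonical homomorphism from G to the monoid of monoidal natural endomorphisms of the forgetful functor from the category of G-representations on k-vector spaces to the category of k-vector spaces (sending g to the natural transformation 'act by g') is an isomorphism of monoids. -/
open scoped TensorProduct

universe u

/-- A monoidal natural endomorphism of the forgetful functor from `G`-representations on
`k`-vector spaces to `k`-vector spaces: a family of `k`-linear endomorphisms, one for
each representation, natural with respect to all `G`-equivariant maps, and compatible
with the monoidal (tensor product) structure of the forgetful functor. -/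
structure MonoidalForgetEnd (k G : Type u) [Field k] [Monoid G] where
  app : ∀ (V : Type u) [AddCommGroup V] [Module k V], Representation k G V → (V →ₗ[k] V)
  naturality : ∀ (V W : Type u) [AddCommGroup V] [Module k V] [AddCommGroup W] [Module k W]
    (ρV : Representation k G V) (ρW : Representation k G W) (f : V →ₗ[k] W),
    (∀ g : G, f ∘ₗ ρV g = ρW g ∘ₗ f) → f ∘ₗ app V ρV = app W ρW ∘ₗ f
  tensor : ∀ (V W : Type u) [AddCommGroup V] [Module k V] [AddCommGroup W] [Module k W]
    (ρV : Representation k G V) (ρW : Representation k G W),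
    app (V ⊗[k] W) (ρV.tprod ρW) = TensorProduct.map (app V ρV) (app W ρW)
  unit : app k (Representation.trivial k (G := G) (V := k)) = LinearMap.id

/-- The canonical map `G → End_⊗(Forget)` sending `g` to the natural endomorphism
"act by `g`". -/
noncomputable def actBy (k G : Type u) [Field k] [Monoid G] (g : G) :
    MonoidalForgetEnd k G where
  app V _ _ ρ := ρ g
  naturality := fun _ _ _ _ _ _ _ _ _ h => h g
  tensor := fun _ _ _ _ _ _ ρV ρW => Representation.tprod_apply ρV ρW g
  unit := rfl

section Aux
open Finsupp

variable {k G : Type u} [Field k] [Monoid G]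

lemma MonoidalForgetEnd.ext' {η θ : MonoidalForgetEnd k G} (h : η.app = θ.app) : η = θ := by
  cases η; cases θ; cases h; rfl

/-- The left regular representation on the monoid algebra. -/
noncomputable def reg (k G : Type u) [Field k] [Monoid G] :
    Representation k G (G →₀ k) where
  toFun g := Finsupp.lmapDomain k k (g * ·)
  map_one' := by
    apply Finsupp.lhom_ext
    intro x r
    simp [Finsupp.mapDomain_single]
  map_mul' g h := by
    apply Finsupp.lhom_ext
    intro x r
    simp [Finsupp.mapDomain_single, mul_assoc]

@[simp] lemma reg_single (g x : G) (r : k) :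
    reg k G g (Finsupp.single x r) = Finsupp.single (g * x) r := by
  simp [reg, Finsupp.mapDomain_single]

/-- Evaluation map kG → V, single h c ↦ c • ρ h v. -/
noncomputable def evalMap {V : Type u} [AddCommGroup V] [Module k V]
    (ρ : Representation k G V) (v : V) : (G →₀ k) →ₗ[k] V :=
  Finsupp.lift V k G fun h => ρ h v

@[simp] lemma evalMap_single {V : Type u} [AddCommGroup V] [Module k V]
    (ρ : Representation k G V) (v : V) (h : G) (c : k) :
    evalMap ρ v (Finsupp.single h c) = c • ρ h v := by
  simp [evalMap, Finsupp.sum_single_index]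

lemma evalMap_equivariant {V : Type u} [AddCommGroup V] [Module k V]
    (ρ : Representation k G V) (v : V) (g : G) :
    evalMap ρ v ∘ₗ reg k G g = ρ g ∘ₗ evalMap ρ v := by
  apply Finsupp.lhom_ext
  intro a b
  simp [reg_single, smul_eq_mul, map_mul,
    Module.End.mul_apply, map_smul]

/-- Comultiplication kG → kG ⊗ kG. -/
noncomputable def comul (k G : Type u) [Field k] [Monoid G] :
    (G →₀ k) →ₗ[k] ((G →₀ k) ⊗[k] (G →₀ k)) :=
  Finsupp.lift _ k G fun h => Finsupp.single h 1 ⊗ₜ Finsupp.single h 1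

@[simp] lemma comul_single (h : G) (c : k) :
    comul k G (Finsupp.single h c) = c • (Finsupp.single h 1 ⊗ₜ[k] Finsupp.single h 1) := by
  simp [comul, Finsupp.sum_single_index]

lemma comul_equivariant (g : G) :
    comul k G ∘ₗ reg k G g = ((reg k G).tprod (reg k G)) g ∘ₗ comul k G := by
  apply Finsupp.lhom_ext
  intro a b
  simp [reg_single, smul_eq_mul, Representation.tprod_apply,
    TensorProduct.map_tmul, TensorProduct.smul_tmul']

/-- Counit kG → k (trivial representation). -/
noncomputable def counit (k G : Type u) [Field k] [Monoid G] : (G →₀ k) →ₗ[k] k :=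
  Finsupp.lift k k G fun _ => (1 : k)

@[simp] lemma counit_single (h : G) (c : k) : counit k G (Finsupp.single h c) = c := by
  simp [counit, Finsupp.sum_single_index]

lemma counit_equivariant (g : G) :
    counit k G ∘ₗ reg k G g =
      Representation.trivial k (G := G) (V := k) g ∘ₗ counit k G := by
  apply Finsupp.lhom_ext
  intro a b
  simp [reg_single]

/-- A grouplike element of the monoid algebra is a `single g 1`. -/
lemma grouplike (a : G →₀ k) (h1 : counit k G a = 1)
    (h2 : comul k G a = a ⊗ₜ[k] a) : ∃ g : G, a = Finsupp.single g 1 := by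
  classical
  have key : ∀ x y : G, (if x = y then a x else 0) = a x * a y := by
    intro x y
    have hmaps : (TensorProduct.lid k k).toLinearMap ∘ₗ
        (TensorProduct.map (Finsupp.lapply x) (Finsupp.lapply y)) ∘ₗ comul k G =
        (if x = y then (Finsupp.lapply x : (G →₀ k) →ₗ[k] k) else 0) := by
      apply Finsupp.lhom_ext
      intro h c
      simp only [LinearMap.comp_apply, comul_single, map_smul, TensorProduct.map_tmul,
        Finsupp.lapply_apply, Finsupp.single_apply, LinearEquiv.coe_coe,
        TensorProduct.lid_tmul, smul_eq_mul]
      split_ifs with hxy <;> by_cases hx : h = x <;> by_cases hy : h = y <;>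
        simp_all [Finsupp.single_apply]
    have h3 := congrArg (fun f : (G →₀ k) →ₗ[k] k => f a) hmaps
    simp only [LinearMap.comp_apply, h2, TensorProduct.map_tmul, Finsupp.lapply_apply,
      LinearEquiv.coe_coe, TensorProduct.lid_tmul, smul_eq_mul] at h3
    split_ifs at h3 ⊢ <;> simp_all
  have hne : a ≠ 0 := by rintro rfl; simp at h1
  obtain ⟨g, hg⟩ := Finsupp.ne_iff.mp hne
  simp only [Finsupp.coe_zero, Pi.zero_apply] at hg
  have hgg : a g = a g * a g := by simpa using key g g
  have hag : a g = 1 :=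
    (mul_left_cancel₀ hg (by rw [mul_one, ← hgg] : a g * 1 = a g * a g)).symm
  refine ⟨g, Finsupp.ext fun y => ?_⟩
  rcases eq_or_ne y g with rfl | hy
  · simp [hag]
  · have h0 : a g * a y = 0 := by
      have := key g y
      simpa [Ne.symm hy] using this.symm
    rw [hag, one_mul] at h0
    simp [h0, Finsupp.single_apply, Ne.symm hy]

end Aux

/-- **Tannaka–Krein reconstruction.** Let `G` be a monoid and `k` a field.
The canonical homomorphism from `G` to the monoid (under composition) of monoidal natural
endomorphisms of the forgetful functor `Rep(G, k) → Vect(k)` is an isomorphism of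
monoids: it is bijective, preserves the unit, and sends products to composites. -/
theorem stmt_0 (k G : Type u) [Field k] [Monoid G] :
    Function.Bijective (actBy k G) ∧
      (∀ (V : Type u) [AddCommGroup V] [Module k V] (ρ : Representation k G V),
        (actBy k G 1).app V ρ = LinearMap.id) ∧
      (∀ (g h : G) (V : Type u) [AddCommGroup V] [Module k V] (ρ : Representation k G V),
        (actBy k G (g * h)).app V ρ = (actBy k G g).app V ρ ∘ₗ (actBy k G h).app V ρ) := by
  refine ⟨⟨?_, ?_⟩, ?_, ?_⟩
  · -- injective
    intro g h hgh
    have := congrArg (fun η : MonoidalForgetEnd k G =>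
      η.app (G →₀ k) (reg k G) (Finsupp.single (1 : G) (1 : k))) hgh
    simp only [actBy, reg_single, smul_eq_mul, mul_one] at this
    exact (Finsupp.single_left_inj (one_ne_zero)).mp this
  · -- surjective
    intro η
    set a := η.app (G →₀ k) (reg k G) (Finsupp.single (1 : G) (1 : k)) with ha
    have hcounit : counit k G a = 1 := by
      have := η.naturality (G →₀ k) k (reg k G)
        (Representation.trivial k (G := G) (V := k)) (counit k G) counit_equivariant
      have := congrArg (fun f : (G →₀ k) →ₗ[k] k => f (Finsupp.single (1 : G) (1 : k))) this
      simpa [η.unit] using this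
    have hcomul : comul k G a = a ⊗ₜ[k] a := by
      have hnat := η.naturality (G →₀ k) ((G →₀ k) ⊗[k] (G →₀ k)) (reg k G)
        ((reg k G).tprod (reg k G)) (comul k G) comul_equivariant
      rw [η.tensor] at hnat
      have := congrArg (fun f : (G →₀ k) →ₗ[k] ((G →₀ k) ⊗[k] (G →₀ k)) =>
        f (Finsupp.single (1 : G) (1 : k))) hnat
      simpa using this
    obtain ⟨g, hg⟩ := grouplike a hcounit hcomul
    refine ⟨g, MonoidalForgetEnd.ext' ?_⟩
    funext V instV instM ρ
    apply LinearMap.ext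
    intro v
    have hnat := η.naturality (G →₀ k) V (reg k G) ρ (evalMap ρ v)
      (evalMap_equivariant ρ v)
    have := congrArg (fun f : (G →₀ k) →ₗ[k] V => f (Finsupp.single (1 : G) (1 : k))) hnat
    simp only [LinearMap.comp_apply, ← ha, hg, evalMap_single, one_smul, map_one,
      Module.End.one_apply] at this
    have hred : (actBy k G g).app V ρ v = ρ g v := rfl
    rw [hred]; exact this
  · intro V _ _ ρ
    simp [actBy, map_one]; rfl
  · intro g h V _ _ ρ
    simp [actBy, map_mul]; rfl
end

section
/- Let S be a set and k a field with |S| ≤ |k| (or both S and k finite). Then every k-algebra homomorphism from the k-algebra of functions S → k to k is evaluation at some point s ∈ S; i.e. the canonical injection S → Hom_{k-Alg}(k^S, k) is a bijection. -/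
universe u

/-- Let `S` be a set and `k` a field with `|S| ≤ |k|` (or both finite).
Then the canonical injection `S → Hom_{k-Alg}(k^S, k)`, sending `s` to evaluation at `s`,
is a bijection. -/
theorem stmt_1 (k S : Type u) [Field k]
    (h : Cardinal.mk S ≤ Cardinal.mk k ∨ (Finite S ∧ Finite k)) :
    Function.Bijective (fun s : S => Pi.evalAlgHom k (fun _ : S => k) s) := by
  classical
  constructor
  · intro s t hst
    by_contra hne
    have h1 := DFunLike.congr_fun hst (Pi.single s (1:k))
    simp [Pi.single_apply, Ne.symm hne] at h1
  · intro φ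
    have key : ∃ s₀ : S, φ (Pi.single s₀ (1:k)) ≠ 0 := by
      rcases h with hc | ⟨hS, _⟩
      · obtain ⟨ι⟩ := (Cardinal.le_def _ _).mp hc
        set f : S → k := fun s => ι s with hf
        set a : k := φ f with ha
        by_cases hs : ∃ s₀, ι s₀ = a
        · obtain ⟨s₀, hs₀⟩ := hs
          refine ⟨s₀, fun hz => ?_⟩
          set w : S → k := fun s => (ι s - a) + (Pi.single s₀ (1:k) : S → k) s with hw
          have hwu : IsUnit w := by
            refine IsUnit.of_mul_eq_one (a := w) (fun s => (w s)⁻¹) (funext fun s => ?_)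
            have hne : w s ≠ 0 := by
              by_cases hss : s = s₀
              · subst hss; simp [hw, hs₀, Pi.single_apply]
              · have : ι s ≠ a := fun hcon => hss (ι.injective (hcon.trans hs₀.symm))
                simp [hw, Pi.single_apply, hss, sub_ne_zero.mpr this]
            exact mul_inv_cancel₀ hne
          have hφw : φ w = 0 := by
            have hweq : w = (f - a • (1 : S → k)) + Pi.single s₀ 1 := by
              funext s; simp [hw, hf]
            rw [hweq, map_add, map_sub, map_smul, map_one, hz, smul_eq_mul, mul_one, ← ha]
            ring
          exact (hwu.map φ).ne_zero hφw
        · exfalso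
          set g : S → k := fun s => ι s - a with hg
          have hgu : IsUnit g := by
            refine IsUnit.of_mul_eq_one (a := g) (fun s => (g s)⁻¹) (funext fun s => ?_)
            have : g s ≠ 0 := sub_ne_zero.mpr (fun hc => hs ⟨s, hc⟩)
            exact mul_inv_cancel₀ this
          have hφg : φ g = 0 := by
            have : g = f - a • (1 : S → k) := by funext s; simp [hg, hf]
            rw [this, map_sub, map_smul, map_one, smul_eq_mul, mul_one, ← ha]; ring
          exact (hgu.map φ).ne_zero hφg
      · have : Fintype S := Fintype.ofFinite S
        by_contra hall
        push_neg at hall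
        have h1 : φ (1 : S → k) = 1 := map_one φ
        have hsum : (1 : S → k) = ∑ s : S, Pi.single s (1:k) := by
          funext t
          simp [Finset.sum_apply, Pi.single_apply]
        rw [hsum, map_sum] at h1
        simp [hall] at h1
    obtain ⟨s₀, hs₀⟩ := key
    refine ⟨s₀, ?_⟩
    have hid : φ (Pi.single s₀ (1:k)) * φ (Pi.single s₀ (1:k)) = φ (Pi.single s₀ (1:k)) := by
      rw [← map_mul]
      congr 1
      funext t
      by_cases hts : t = s₀ <;> simp [Pi.single_apply, hts]
    have hχ : φ (Pi.single s₀ (1:k)) = 1 := (mul_eq_right₀ hs₀).mp hid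
    ext f
    have hmul : Pi.single s₀ (1:k) * f = f s₀ • (Pi.single s₀ (1:k) : S → k) := by
      funext t
      by_cases hts : t = s₀ <;> simp [Pi.single_apply, hts, mul_comm]
    have := congrArg φ hmul
    rw [map_mul, map_smul, hχ, one_mul, smul_eq_mul, mul_one] at this
    simpa using this.symm
end

section
/- Let C be a locally presentable category and D a locally small category. A functor F : C → D is a left adjoint if and only if it preserves all small colimits. -/
open CategoryTheory CategoryTheory.Limits

universe v u u₂

/-- A category `J` is `κ`-filtered if every diagram in `J` with fewer than `κ` arrows
admits a cocone. -/
def IsCardinalFiltered (J : Type v) [Category.{v} J] (κ : Cardinal.{v}) : Prop :=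
  ∀ (K : Type v) (_ : SmallCategory K),
    Cardinal.mk (Σ (a : K) (b : K), a ⟶ b) < κ →
      ∀ F : K ⥤ J, Nonempty (Limits.Cocone F)

/-- An object `x` of a category `C` is `κ`-presentable (`κ`-compact, "κ-little") if
`Hom(x, -)` preserves colimits of `κ`-filtered diagrams. -/
def IsCardinalPresentable {C : Type u} [Category.{v} C] (x : C) (κ : Cardinal.{v}) : Prop :=
  ∀ (J : Type v) (_ : SmallCategory J), IsCardinalFiltered J κ →
    Nonempty (PreservesColimitsOfShape J (coyoneda.obj (Opposite.op x)))

/-- A category is *locally presentable* if it is locally small (automatic here),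
cocomplete, and there is a set of presentable objects generating it under colimits. -/
def IsLocallyPresentable (C : Type u) [Category.{v} C] : Prop :=
  HasColimitsOfSize.{v, v} C ∧
    ∃ (ι : Type v) (G : ι → C),
      (∀ i, ∃ κ : Cardinal.{v}, κ.IsRegular ∧ IsCardinalPresentable (G i) κ) ∧
      ∀ X : C, ∃ (J : Type v) (_ : SmallCategory J) (F : J ⥤ C) (c : Limits.Cocone F),
        (∀ j : J, ∃ i : ι, Nonempty (F.obj j ≅ G i)) ∧
        Nonempty (Limits.IsColimit c) ∧ Nonempty (c.pt ≅ X)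

/-- Dual of `hasInitial_of_weakly_initial_and_hasWideEqualizers`: a category with wide
coequalizers and a weakly terminal object has a terminal object. -/
theorem aux_hasTerminal_of_weakly_terminal {E : Type u} [Category.{v} E]
    [HasWideCoequalizers.{v} E] {T : E} (hT : ∀ X : E, Nonempty (X ⟶ T)) : HasTerminal E := by
  let endos := T ⟶ T
  let i := wideCoequalizer.π (id : endos → endos)
  haveI : Nonempty endos := ⟨𝟙 _⟩
  have : ∀ X : E, Unique (X ⟶ wideCoequalizer (id : endos → endos)) := by
    intro X
    refine ⟨⟨Classical.choice (hT X) ≫ i⟩, fun a => ?_⟩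
    let Q := coequalizer a (Classical.choice (hT X) ≫ i)
    let e : wideCoequalizer (id : endos → endos) ⟶ Q := coequalizer.π _ _
    let h : Q ⟶ T := Classical.choice (hT Q)
    have key : i ≫ e ≫ (h ≫ i) = (𝟙 T) ≫ i := by
      have := wideCoequalizer.condition (id : endos → endos) (i ≫ e ≫ h) (𝟙 T)
      simpa using this
    rw [Category.id_comp] at key
    haveI : IsSplitMono e := IsSplitMono.mk' ⟨h ≫ i, by
      rw [← cancel_epi i]; simpa using key⟩
    rw [← cancel_mono e]
    exact (coequalizer.condition _ _)
  exact hasTerminal_of_unique (wideCoequalizer (id : endos → endos))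

/-- The key construction: under cocompleteness, colimit-generation by a set, and
colimit preservation, each costructured arrow category has a terminal object. -/
theorem aux_hasTerminal_costructuredArrow
    {C : Type u} [Category.{v} C] {D : Type u₂} [Category.{v} D]
    [HasColimitsOfSize.{v, v} C] (F : C ⥤ D) [PreservesColimitsOfSize.{v, v} F]
    {ι : Type v} (G : ι → C)
    (hgen : ∀ A : C, ∃ (J : Type v) (_ : SmallCategory J) (P : J ⥤ C) (c : Cocone P),
        (∀ j : J, ∃ i : ι, Nonempty (P.obj j ≅ G i)) ∧
        Nonempty (IsColimit c) ∧ Nonempty (c.pt ≅ A))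
    (X : D) : HasTerminal (CostructuredArrow F X) := by
  -- The small "category of generators over X"
  let σ : Type v := Σ i : ι, (F.obj (G i) ⟶ X)
  let Φ₀ : σ → CostructuredArrow F X := fun p => CostructuredArrow.mk p.2
  let Φ : InducedCategory (CostructuredArrow F X) Φ₀ ⥤ CostructuredArrow F X :=
    inducedFunctor Φ₀
  let W : CostructuredArrow F X := colimit Φ
  -- W is weakly terminal
  have hW : ∀ Z : CostructuredArrow F X, Nonempty (Z ⟶ W) := by
    intro Z
    obtain ⟨J, instJ, P, c, hobj, ⟨hc⟩, ⟨eA⟩⟩ := hgen Z.left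
    have iso : ∀ j : J, Σ i : ι, (P.obj j ≅ G i) := fun j =>
      ⟨(hobj j).choose, Classical.choice (hobj j).choose_spec⟩
    let h' : F.obj c.pt ⟶ X := F.map eA.hom ≫ Z.hom
    let a : J → InducedCategory (CostructuredArrow F X) Φ₀ := fun j =>
      (⟨(iso j).1, F.map (iso j).2.inv ≫ F.map (c.ι.app j) ≫ h'⟩ : σ)
    have hΦ : ∀ j : J, (Φ₀ (a j)).hom = F.map (iso j).2.inv ≫ F.map (c.ι.app j) ≫ h' :=
      fun j => rfl
    let ℓ : ∀ j : J, P.obj j ⟶ W.left := fun j =>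
      (iso j).2.hom ≫ (colimit.ι Φ (a j)).left
    have hnat : ∀ {j j' : J} (f : j ⟶ j'), P.map f ≫ ℓ j' = ℓ j := by
      intro j j' f
      let t : a j ⟶ a j' :=
        InducedCategory.homMk (CostructuredArrow.homMk ((iso j).2.inv ≫ P.map f ≫ (iso j').2.hom) (by
          show F.map ((iso j).2.inv ≫ P.map f ≫ (iso j').2.hom) ≫
              (F.map (iso j').2.inv ≫ F.map (c.ι.app j') ≫ h')
            = F.map (iso j).2.inv ≫ F.map (c.ι.app j) ≫ h'
          simp only [Functor.map_comp, Category.assoc, Iso.map_hom_inv_id_assoc]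
          slice_lhs 2 3 => rw [← F.map_comp]
          rw [c.w f]
          simp [h']))
      have hl := congrArg CommaMorphism.left (colimit.w Φ t)
      simp only [CostructuredArrow.comp_left] at hl
      have ht : (Φ.map t).left = (iso j).2.inv ≫ P.map f ≫ (iso j').2.hom := rfl
      rw [ht] at hl
      show P.map f ≫ (iso j').2.hom ≫ (colimit.ι Φ (a j')).left
        = (iso j).2.hom ≫ (colimit.ι Φ (a j)).left
      rw [← hl]
      simp
    let cc : Cocone P :=
      { pt := W.left
        ι :=
          { app := ℓ
            naturality := fun j j' f => by simpa using hnat f } }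
    let g : c.pt ⟶ W.left := hc.desc cc
    have key : F.map g ≫ W.hom = h' := by
      apply (isColimitOfPreserves F hc).hom_ext
      intro j
      have fac : c.ι.app j ≫ g = ℓ j := hc.fac cc j
      have wj : F.map ((colimit.ι Φ (a j)).left) ≫ W.hom = (Φ₀ (a j)).hom :=
        CostructuredArrow.w (colimit.ι Φ (a j))
      show F.map (c.ι.app j) ≫ F.map g ≫ W.hom = F.map (c.ι.app j) ≫ h'
      rw [← Functor.map_comp_assoc, fac]
      show F.map ((iso j).2.hom ≫ (colimit.ι Φ (a j)).left) ≫ W.hom = _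
      rw [Functor.map_comp, Category.assoc, wj, hΦ j, Iso.map_hom_inv_id_assoc]
    let m1 : CostructuredArrow.mk h' ⟶ W := CostructuredArrow.homMk g key
    let m0 : Z ⟶ CostructuredArrow.mk h' :=
      CostructuredArrow.homMk eA.inv (by
        show F.map eA.inv ≫ (F.map eA.hom ≫ Z.hom) = Z.hom
        simp)
    exact ⟨m0 ≫ m1⟩
  haveI : HasWideCoequalizers.{v} (CostructuredArrow F X) := fun _ => inferInstance
  exact aux_hasTerminal_of_weakly_terminal hW

/-- Let `C` be a locally presentable category and `D` a locally small
category.  A functor `F : C ⥤ D` is a left adjoint if and only if it preserves all small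
colimits. -/
theorem stmt_4 (C : Type u) [Category.{v} C] (hC : _root_.IsLocallyPresentable C)
    (D : Type u₂) [Category.{v} D] (F : C ⥤ D) :
    F.IsLeftAdjoint ↔ Nonempty (PreservesColimitsOfSize.{v, v} F) := by
  constructor
  · intro h
    exact ⟨(Adjunction.ofIsLeftAdjoint F).leftAdjoint_preservesColimits⟩
  · rintro ⟨hF⟩
    obtain ⟨hco, ι, G, -, hgen⟩ := hC
    haveI := hco
    haveI := hF
    haveI : ∀ X : D, HasTerminal (CostructuredArrow F X) := fun X =>
      aux_hasTerminal_costructuredArrow F G hgen X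
    exact isLeftAdjoint_of_costructuredArrowTerminals F
end

section
/- Let M be the 'walking idempotent' monoid (one object, one non-identity endomorphism m with m² = m) and P the 'walking projection' category (two objects •, ∘ with morphisms p : • → ∘ and i : ∘ → • satisfying p ∘ i = id_∘). Then there is no small category X such that the functor category Fun(X, M) is equivalent to P. -/
open CategoryTheory

universe u

/-- The "walking idempotent" monoid `{1, m}` with `m * m = m`. -/
inductive WI : Type
  | one : WI
  | m : WI

instance : Monoid WI where
  one := .one
  mul a b := match a with | .one => b | .m => .m
  one_mul _ := rfl
  mul_one a := by cases a <;> rfl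
  mul_assoc a b c := by cases a <;> rfl

/-- The morphism `m` viewed as a morphism between (the) objects of `SingleObj WI`. -/
def mHom {x y : SingleObj WI} : x ⟶ y := WI.m

lemma comp_mHom {x y z : SingleObj WI} (f : x ⟶ y) : f ≫ (mHom : y ⟶ z) = mHom := by
  have key : ∀ w : WI, (show x ⟶ y from w) ≫ (mHom : y ⟶ z) = mHom := by
    intro w; cases w <;> rfl
  exact key f

lemma mHom_comp {x y z : SingleObj WI} (f : y ⟶ z) : (mHom : x ⟶ y) ≫ f = mHom := by
  have key : ∀ w : WI, (mHom : x ⟶ y) ≫ (show y ⟶ z from w) = mHom := by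
    intro w; cases w <;> rfl
  exact key f

lemma mHom_ne_id (x : SingleObj WI) : (mHom : x ⟶ x) ≠ 𝟙 x := by
  intro h
  exact WI.noConfusion h

/-- The object `(⋆, m)` of the Karoubi envelope. -/
def Aobj : Idempotents.Karoubi (SingleObj WI) :=
  ⟨SingleObj.star WI, mHom, comp_mHom mHom⟩

/-- The object `(⋆, 1)` of the Karoubi envelope. -/
def Bobj : Idempotents.Karoubi (SingleObj WI) :=
  ⟨SingleObj.star WI, 𝟙 _, by simp⟩

lemma endA_f (g : Aobj ⟶ Aobj) : g.f = mHom := by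
  have h := g.comm
  rw [show Aobj.p = mHom from rfl, comp_mHom, mHom_comp] at h
  exact h.symm

instance : Subsingleton (Aobj ⟶ Aobj) := by
  constructor
  intro a b
  apply Idempotents.Karoubi.Hom.ext
  rw [endA_f a, endA_f b]

/-- The nonidentity endomorphism of `Bobj`. -/
def mEndB : Bobj ⟶ Bobj :=
  ⟨mHom, by
    rw [show Bobj.p = 𝟙 _ from rfl]
    simp⟩

lemma mEndB_ne_id : mEndB ≠ 𝟙 Bobj := by
  intro h
  have := congrArg Idempotents.Karoubi.Hom.f h
  exact mHom_ne_id _ this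

/-- The "constant m" natural endomorphism of any functor into `SingleObj WI`. -/
def constM {X : Type u} [SmallCategory X] (F : X ⥤ SingleObj WI) : F ⟶ F where
  app _ := mHom
  naturality x y f := by rw [comp_mHom, mHom_comp]

/-- Let `M` be the walking idempotent (the one-object category with a
single nonidentity endomorphism `m` satisfying `m² = m`) and `P` the walking projection
(its idempotent splitting, i.e. Karoubi envelope).  Then there is no small category `X`
with `Fun(X, M)` equivalent to `P`. -/
theorem stmt_19 (X : Type u) [SmallCategory X] :
    IsEmpty ((X ⥤ SingleObj WI) ≌ Idempotents.Karoubi (SingleObj WI)) := by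
  constructor
  intro E
  rcases isEmpty_or_nonempty X with hX | hX
  · -- X empty: all hom-sets in the functor category are subsingletons,
    -- but Bobj has two distinct endomorphisms.
    have hsub : Subsingleton (E.inverse.obj Bobj ⟶ E.inverse.obj Bobj) := by
      constructor
      intro a b
      ext x
      exact hX.elim x
    have h1 : E.inverse.map mEndB = E.inverse.map (𝟙 Bobj) := hsub.elim _ _
    exact mEndB_ne_id (E.inverse.map_injective h1)
  · -- X nonempty: every object of the functor category has a nonidentity
    -- endomorphism (the constant-m transformation), but End(Aobj) is trivial.
    obtain ⟨x₀⟩ := hX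
    set F := E.inverse.obj Aobj with hF
    obtain ⟨g, hg⟩ := E.inverse.map_surjective (constM F)
    obtain ⟨g', hg'⟩ := E.inverse.map_surjective (𝟙 F)
    have hgg : g = g' := Subsingleton.elim _ _
    have heq : constM F = 𝟙 F := by rw [← hg, hgg, hg']
    have happ := congrArg (fun (α : F ⟶ F) => α.app x₀) heq
    simp only [constM, NatTrans.id_app] at happ
    exact mHom_ne_id _ happ
end
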